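/- Let (U, δ) be a differential field of characteristic zero with constants C, and let K ⊆ L ⊆ U be differential subfields. Then K(C) ∩ L = K(L ∩ C), i.e., the intersection of L with the field generated by K and all constants of U equals the field generated by K and the constants of L. -/

import Mathlib

section Aux

variable {U : Type*} [Field U] (δ : U → U)

theorem delta_zero (hadd : ∀ a b, δ (a + b) = δ a + δ b) : δ 0 = 0 := by
  have h := hadd 0 0
  rw [add_zero] at h
  exact (left_eq_add.mp h)

theorem delta_one (hmul : ∀ a b, δ (a * b) = a * δ b + b * δ a) : δ 1 = 0 := by
  have h := hmul 1 1
  rw [mul_one, one_mul] at h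
  exact (left_eq_add.mp h)

theorem delta_sum (hadd : ∀ a b, δ (a + b) = δ a + δ b)
    {ι : Type*} (s : Finset ι) (f : ι → U) :
    δ (∑ i ∈ s, f i) = ∑ i ∈ s, δ (f i) := by
  classical
  induction s using Finset.induction with
  | empty => simpa using delta_zero δ hadd
  | insert _ _ h ih =>
    rw [Finset.sum_insert h, Finset.sum_insert h, hadd, ih]

/-- The subfield of constants. -/
def constSubfield (hadd : ∀ a b, δ (a + b) = δ a + δ b)
    (hmul : ∀ a b, δ (a * b) = a * δ b + b * δ a) : Subfield U where
  carrier := {x | δ x = 0}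
  mul_mem' := by
    intro a b ha hb
    simp only [Set.mem_setOf_eq] at *
    rw [hmul, ha, hb, mul_zero, mul_zero, add_zero]
  one_mem' := delta_one δ hmul
  add_mem' := by
    intro a b ha hb
    simp only [Set.mem_setOf_eq] at *
    rw [hadd, ha, hb, add_zero]
  zero_mem' := delta_zero δ hadd
  neg_mem' := by
    intro a ha
    simp only [Set.mem_setOf_eq] at *
    have h := hadd a (-a)
    rw [add_neg_cancel, delta_zero δ hadd, ha, zero_add] at h
    exact h.symm
  inv_mem' := by
    intro a ha
    simp only [Set.mem_setOf_eq] at *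
    rcases eq_or_ne a 0 with h | h
    · rw [h, inv_zero]; exact delta_zero δ hadd
    · have h1 := hmul a a⁻¹
      rw [mul_inv_cancel₀ h, delta_one δ hmul, ha, mul_zero, add_zero] at h1
      have := h1.symm
      rcases mul_eq_zero.mp this with h2 | h2
      · exact absurd h2 h
      · exact h2

/-- Key lemma: constants linearly independent over the constants of `L`
remain linearly independent over `L`. -/
theorem key_lemma (hadd : ∀ a b, δ (a + b) = δ a + δ b)
    (hmul : ∀ a b, δ (a * b) = a * δ b + b * δ a)
    (L : Subfield U) (hL : ∀ x ∈ L, δ x ∈ L) :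
    ∀ s : Finset U, (∀ c ∈ s, δ c = 0) →
    (∀ g : U → U, (∀ c, g c ∈ L ∧ δ (g c) = 0) →
      ∑ c ∈ s, g c * c = 0 → ∀ c ∈ s, g c = 0) →
    ∀ l : U → U, (∀ c, l c ∈ L) → ∑ c ∈ s, l c * c = 0 →
    ∀ c ∈ s, l c = 0 := by
  classical
  intro s
  induction s using Finset.strongInduction with
  | _ s IH =>
    intro hsC hind l hl hsum
    by_contra hcon
    push_neg at hcon
    obtain ⟨i₀, hi₀s, hi₀⟩ := hcon
    set l' : U → U := fun c => l c / l i₀ with hl'def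
    have hl'mem : ∀ c, l' c ∈ L := fun c => L.div_mem (hl c) (hl i₀)
    have hl'i₀ : l' i₀ = 1 := div_self hi₀
    have hsum' : ∑ c ∈ s, l' c * c = 0 := by
      have h1 : ∑ c ∈ s, l' c * c = (l i₀)⁻¹ * ∑ c ∈ s, l c * c := by
        rw [Finset.mul_sum]
        refine Finset.sum_congr rfl fun c _ => ?_
        simp only [hl'def, div_eq_inv_mul]
        ring
      rw [h1, hsum, mul_zero]
    have hdsum : ∑ c ∈ s, δ (l' c) * c = 0 := by
      have h1 : δ (∑ c ∈ s, l' c * c) = ∑ c ∈ s, δ (l' c) * c := by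
        rw [delta_sum δ hadd]
        refine Finset.sum_congr rfl fun c hc => ?_
        rw [hmul, hsC c hc, mul_zero, zero_add, mul_comm]
      rw [hsum', delta_zero δ hadd] at h1
      exact h1.symm
    have hdi₀ : δ (l' i₀) = 0 := by rw [hl'i₀]; exact delta_one δ hmul
    have hsum'' : ∑ c ∈ s.erase i₀, δ (l' c) * c = 0 := by
      rw [← Finset.add_sum_erase s (fun c => δ (l' c) * c) hi₀s] at hdsum
      simp only [hdi₀, zero_mul, zero_add] at hdsum
      exact hdsum
    -- apply induction hypothesis to the erased set
    have herase : s.erase i₀ ⊂ s := Finset.erase_ssubset hi₀s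
    have hind' : ∀ g : U → U, (∀ c, g c ∈ L ∧ δ (g c) = 0) →
        ∑ c ∈ s.erase i₀, g c * c = 0 → ∀ c ∈ s.erase i₀, g c = 0 := by
      intro g hg hgsum c hc
      set g' : U → U := fun c => if c = i₀ then 0 else g c with hg'def
      have hg'mem : ∀ c, g' c ∈ L ∧ δ (g' c) = 0 := by
        intro c
        simp only [hg'def]
        split
        · exact ⟨L.zero_mem, delta_zero δ hadd⟩
        · exact hg c
      have hg'sum : ∑ c ∈ s, g' c * c = 0 := by
        rw [← Finset.add_sum_erase s (fun c => g' c * c) hi₀s]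
        have h1 : g' i₀ = 0 := by simp [hg'def]
        have h2 : ∑ c ∈ s.erase i₀, g' c * c = ∑ c ∈ s.erase i₀, g c * c := by
          refine Finset.sum_congr rfl fun c hc => ?_
          have : c ≠ i₀ := Finset.ne_of_mem_erase hc
          simp [hg'def, this]
        rw [h1, zero_mul, zero_add, h2, hgsum]
      have := hind g' hg'mem hg'sum c (Finset.mem_of_mem_erase hc)
      have hcne : c ≠ i₀ := Finset.ne_of_mem_erase hc
      simpa [hg'def, hcne] using this
    have hIH := IH (s.erase i₀) herase
      (fun c hc => hsC c (Finset.mem_of_mem_erase hc)) hind'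
      (fun c => δ (l' c)) (fun c => hL _ (hl'mem c)) hsum''
    -- so all δ (l' c) = 0 on s
    have hall : ∀ c ∈ s, δ (l' c) = 0 := by
      intro c hc
      rcases eq_or_ne c i₀ with h | h
      · rw [h]; exact hdi₀
      · exact hIH c (Finset.mem_erase.mpr ⟨h, hc⟩)
    -- now l' is a nontrivial relation with constant coefficients
    set g : U → U := fun c => if c ∈ s then l' c else 0 with hgdef
    have hgmem : ∀ c, g c ∈ L ∧ δ (g c) = 0 := by
      intro c
      simp only [hgdef]
      split
      · next h => exact ⟨hl'mem c, hall c h⟩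
      · exact ⟨L.zero_mem, delta_zero δ hadd⟩
    have hgsum : ∑ c ∈ s, g c * c = 0 := by
      have : ∑ c ∈ s, g c * c = ∑ c ∈ s, l' c * c := by
        refine Finset.sum_congr rfl fun c hc => ?_
        simp [hgdef, hc]
      rw [this, hsum']
    have := hind g hgmem hgsum i₀ hi₀s
    rw [hgdef] at this
    simp only [hi₀s, if_true] at this
    rw [hl'i₀] at this
    exact one_ne_zero this

/-- Bridge: `LinearIndependent` over a subfield gives the relation form used
in `key_lemma`. -/
theorem bridge_lemma (CL : Subfield U) (b : Set U)
    (hbi : LinearIndependent ↥CL ((↑) : b → U))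
    (s : Finset U) (hsb : ↑s ⊆ b) (g : U → U) (hg : ∀ c, g c ∈ CL)
    (hsum : ∑ c ∈ s, g c * c = 0) : ∀ c ∈ s, g c = 0 := by
  classical
  have h := linearIndependent_iff'.mp hbi
  let emb : {x // x ∈ s} ↪ ↥b :=
    ⟨fun c => ⟨c.1, hsb c.2⟩, by
      intro a b' hab
      exact Subtype.ext (congrArg (fun z : ↥b => (z : U)) hab)⟩
  let sF : Finset ↥b := s.attach.map emb
  let g' : ↥b → ↥CL := fun i => ⟨g i.1, hg i.1⟩
  have hs0 : ∑ i ∈ sF, g' i • (i : U) = 0 := by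
    rw [Finset.sum_map]
    have : ∀ c ∈ s.attach, g' (emb c) • ((emb c : ↥b) : U) = g c.1 * c.1 := by
      intro c _; rfl
    rw [Finset.sum_congr rfl this, Finset.sum_attach s (fun c => g c * c)]
    exact hsum
  have hz := h sF g' hs0
  intro c hc
  have hmem : (⟨c, hsb hc⟩ : ↥b) ∈ sF := by
    simp only [sF, Finset.mem_map]
    exact ⟨⟨c, hc⟩, Finset.mem_attach _ _, rfl⟩
  have := hz ⟨c, hsb hc⟩ hmem
  exact congrArg Subtype.val this

/-- The subring generated by `K ∪ C` lies in the `K`-span of `C`. -/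
theorem closure_subset_span (hadd : ∀ a b, δ (a + b) = δ a + δ b)
    (hmul : ∀ a b, δ (a * b) = a * δ b + b * δ a) (K : Subfield U) :
    ∀ x ∈ Subring.closure ((K : Set U) ∪ {x : U | δ x = 0}),
      x ∈ Submodule.span ↥K {x : U | δ x = 0} := by
  intro x hx
  induction hx using Subring.closure_induction with
  | mem y hy =>
    rcases hy with hy | hy
    · have h1 : (1 : U) ∈ ({x : U | δ x = 0} : Set U) := delta_one δ hmul
      have h2 := Submodule.smul_mem (Submodule.span ↥K {x : U | δ x = 0})
        (⟨y, hy⟩ : ↥K) (Submodule.subset_span h1)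
      have h3 : (⟨y, hy⟩ : ↥K) • (1 : U) = y := by
        show y * 1 = y
        rw [mul_one]
      rwa [h3] at h2
    · exact Submodule.subset_span hy
  | zero => exact Submodule.zero_mem _
  | one => exact Submodule.subset_span (delta_one δ hmul)
  | add a b _ _ ha hb => exact Submodule.add_mem _ ha hb
  | neg a _ ha => exact Submodule.neg_mem _ ha
  | mul a b _ _ ha hb =>
    have h1 := Submodule.mul_mem_mul ha hb
    rw [Submodule.span_mul_span] at h1
    refine Submodule.span_mono ?_ h1
    rintro z ⟨u, hu, v, hv, rfl⟩
    show δ (u * v) = 0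
    rw [hmul, hu, hv, mul_zero, mul_zero, add_zero]

end Aux

/-- Lemma 3.1(i): for differential subfields `K ⊆ L` of a differential field `U`
with constants `C`, one has `K(C) ∩ L = K(L ∩ C)`. -/
theorem adjoin_constants_inter
    (U : Type*) [Field U] [CharZero U] (δ : U → U)
    (hadd : ∀ a b, δ (a + b) = δ a + δ b)
    (hmul : ∀ a b, δ (a * b) = a * δ b + b * δ a)
    (K L : Subfield U)
    (hK : ∀ x ∈ K, δ x ∈ K)
    (hL : ∀ x ∈ L, δ x ∈ L)
    (hKL : K ≤ L) :
    Subfield.closure ((K : Set U) ∪ {x : U | δ x = 0}) ⊓ L =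
      Subfield.closure ((K : Set U) ∪ ((L : Set U) ∩ {x : U | δ x = 0})) := by
  classical
  set Cset : Set U := {x : U | δ x = 0} with hCset
  set F : Subfield U := Subfield.closure ((K : Set U) ∪ ((L : Set U) ∩ Cset)) with hF
  apply le_antisymm
  · -- hard direction
    intro x hx
    obtain ⟨hx1, hxL⟩ := Subfield.mem_inf.mp hx
    obtain ⟨p, hp, q, hq, hpq⟩ := Subfield.mem_closure_iff.mp hx1
    rcases eq_or_ne q 0 with hq0 | hq0
    · rw [hq0, div_zero] at hpq
      rw [← hpq]
      exact F.zero_mem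
    have hxq : x * q = p := by
      rw [← hpq, div_mul_cancel₀ _ hq0]
    -- p, q are K-linear combinations of constants
    have hpspan := closure_subset_span δ hadd hmul K p hp
    have hqspan := closure_subset_span δ hadd hmul K q hq
    obtain ⟨f, hfsupp, hfsum⟩ := Submodule.mem_span_set.mp hpspan
    obtain ⟨g, hgsupp, hgsum⟩ := Submodule.mem_span_set.mp hqspan
    -- the subfield of constants of L
    set CLf : Subfield U := L ⊓ constSubfield δ hadd hmul with hCLf
    set T : Set U := ↑f.support ∪ ↑g.support with hT
    have hTC : T ⊆ Cset := Set.union_subset hfsupp hgsupp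
    obtain ⟨b, hbT, hspan, hbind⟩ := exists_linearIndependent ↥CLf T
    have hTfin : T.Finite := (f.support.finite_toSet.union g.support.finite_toSet)
    have hbfin : b.Finite := hTfin.subset hbT
    set bF : Finset U := hbfin.toFinset with hbF
    have hbFb : (bF : Set U) = b := hbfin.coe_toFinset
    -- represent each element of T over the basis b
    have Hrep : ∀ c ∈ T, ∃ h : U →₀ ↥CLf, ↑h.support ⊆ b ∧
        (h.sum fun e k => k • e) = c := by
      intro c hc
      have : c ∈ Submodule.span ↥CLf b := by
        rw [hspan]
        exact Submodule.subset_span hc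
      exact Submodule.mem_span_set.mp this
    choose! rep hrep1 hrep2 using Hrep
    -- each c ∈ T equals a sum over bF
    have hcrep : ∀ c ∈ T, c = ∑ e ∈ bF, ((rep c e : U)) * e := by
      intro c hc
      have h0 : ((rep c).sum fun e k => k • e)
          = ∑ e ∈ (rep c).support, ((rep c e : U)) * e := rfl
      conv_lhs => rw [← hrep2 c hc]
      rw [h0]
      refine Finset.sum_subset ?_ ?_
      · intro e he
        rw [Set.Finite.mem_toFinset]
        exact hrep1 c hc he
      · intro e _ he
        rw [Finsupp.notMem_support_iff.mp he]
        simp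
    set α : U → U := fun e => ∑ c ∈ f.support, (f c : U) * (rep c e : U) with hα
    set β : U → U := fun e => ∑ c ∈ g.support, (g c : U) * (rep c e : U) with hβ
    have hTf : ∀ c ∈ f.support, c ∈ T := fun c hc => Set.mem_union_left _ hc
    have hTg : ∀ c ∈ g.support, c ∈ T := fun c hc => Set.mem_union_right _ hc
    have hpsum : p = ∑ e ∈ bF, α e * e := by
      have hfsum' : ∑ c ∈ f.support, (f c) • c = p := hfsum
      rw [← hfsum']
      have h1 : ∀ c ∈ f.support, (f c) • c = ∑ e ∈ bF, (f c : U) * ((rep c e : U) * e) := by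
        intro c hc
        rw [← Finset.mul_sum]
        show (f c : U) * c = _
        rw [← hcrep c (hTf c hc)]
      rw [Finset.sum_congr rfl h1, Finset.sum_comm]
      refine Finset.sum_congr rfl fun e _ => ?_
      rw [hα, Finset.sum_mul]
      exact Finset.sum_congr rfl fun c _ => by ring
    have hqsum : q = ∑ e ∈ bF, β e * e := by
      have hgsum' : ∑ c ∈ g.support, (g c) • c = q := hgsum
      rw [← hgsum']
      have h1 : ∀ c ∈ g.support, (g c) • c = ∑ e ∈ bF, (g c : U) * ((rep c e : U) * e) := by
        intro c hc
        rw [← Finset.mul_sum]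
        show (g c : U) * c = _
        rw [← hcrep c (hTg c hc)]
      rw [Finset.sum_congr rfl h1, Finset.sum_comm]
      refine Finset.sum_congr rfl fun e _ => ?_
      rw [hβ, Finset.sum_mul]
      exact Finset.sum_congr rfl fun c _ => by ring
    -- membership facts for α, β
    have hrepL : ∀ c e, (rep c e : U) ∈ L := fun c e => (Subfield.mem_inf.mp (rep c e).2).1
    have hrepC : ∀ c e, δ (rep c e : U) = 0 := fun c e => (Subfield.mem_inf.mp (rep c e).2).2
    have hαL : ∀ e, α e ∈ L := by
      intro e
      exact L.sum_mem fun c _ => L.mul_mem (hKL (f c).2) (hrepL c e)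
    have hβL : ∀ e, β e ∈ L := by
      intro e
      exact L.sum_mem fun c _ => L.mul_mem (hKL (g c).2) (hrepL c e)
    have hαF : ∀ e, α e ∈ F := by
      intro e
      refine F.sum_mem fun c _ => F.mul_mem ?_ ?_
      · exact Subfield.subset_closure (Or.inl (f c).2)
      · exact Subfield.subset_closure (Or.inr ⟨hrepL c e, hrepC c e⟩)
    have hβF : ∀ e, β e ∈ F := by
      intro e
      refine F.sum_mem fun c _ => F.mul_mem ?_ ?_
      · exact Subfield.subset_closure (Or.inl (g c).2)
      · exact Subfield.subset_closure (Or.inr ⟨hrepL c e, hrepC c e⟩)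
    -- the relation ∑ (x β e - α e) e = 0
    have hrel : ∑ e ∈ bF, (x * β e - α e) * e = 0 := by
      have : ∑ e ∈ bF, (x * β e - α e) * e
          = x * ∑ e ∈ bF, β e * e - ∑ e ∈ bF, α e * e := by
        rw [Finset.mul_sum, ← Finset.sum_sub_distrib]
        exact Finset.sum_congr rfl fun e _ => by ring
      rw [this, ← hqsum, ← hpsum, hxq, sub_self]
    -- apply the key lemma
    have hbFC : ∀ c ∈ bF, δ c = 0 := by
      intro c hc
      rw [Set.Finite.mem_toFinset] at hc
      exact hTC (hbT hc)
    have hind : ∀ g' : U → U, (∀ c, g' c ∈ L ∧ δ (g' c) = 0) →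
        ∑ c ∈ bF, g' c * c = 0 → ∀ c ∈ bF, g' c = 0 := by
      intro g' hg' hg'sum
      refine bridge_lemma CLf b hbind bF ?_ g' ?_ hg'sum
      · rw [hbFb]
      · intro c
        exact Subfield.mem_inf.mpr ⟨(hg' c).1, (hg' c).2⟩
    have hzero := key_lemma δ hadd hmul L hL bF hbFC hind
      (fun e => x * β e - α e)
      (fun e => L.sub_mem (L.mul_mem hxL (hβL e)) (hαL e)) hrel
    -- find a nonzero β e
    have hβne : ∃ e ∈ bF, β e ≠ 0 := by
      by_contra hcon
      push_neg at hcon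
      apply hq0
      rw [hqsum]
      refine Finset.sum_eq_zero fun e he => ?_
      rw [hcon e he, zero_mul]
    obtain ⟨e, he, hβe⟩ := hβne
    have hxe : x * β e = α e := by
      have := hzero e he
      linear_combination this
    have : x = α e / β e := (eq_div_iff hβe).mpr hxe
    rw [this]
    exact F.div_mem (hαF e) (hβF e)
  · -- easy direction
    refine le_inf ?_ ?_
    · exact Subfield.closure_mono
        (Set.union_subset_union_right _ Set.inter_subset_right)
    · rw [Subfield.closure_le]
      exact Set.union_subset (SetLike.coe_subset_coe.mpr hKL) Set.inter_subset_left
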